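/- The Shannon entropy Φ(p) = −Σⱼ pⱼ log pⱼ satisfies ∫₀¹ Φ(t·e(1) + (1−t)·ē)⁻² dt = ∞, where ē = (1/n,…,1/n) is the barycenter of the unit simplex in ℝⁿ and e(1) = (1,0,…,0). -/
import Mathlib


open MeasureTheory

lemma neg_mul_log_le_one_sub {x : ℝ} (hx : 0 < x) : -(x * Real.log x) ≤ 1 - x := by
  have h := Real.log_le_sub_one_of_pos (inv_pos.2 hx)
  rw [Real.log_inv] at h
  have := mul_le_mul_of_nonneg_left h hx.le
  have hxi : x * x⁻¹ = 1 := mul_inv_cancel₀ hx.ne'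
  nlinarith

lemma neg_mul_log_le_two_sqrt {x : ℝ} (hx : 0 < x) : -(x * Real.log x) ≤ 2 * Real.sqrt x := by
  set s := Real.sqrt x with hs
  have hs0 : 0 < s := Real.sqrt_pos.2 hx
  have hs2 : s ^ 2 = x := Real.sq_sqrt hx.le
  have hlog : Real.log x = 2 * Real.log s := by
    rw [← hs2, Real.log_pow]; push_cast; ring
  have h := Real.log_le_sub_one_of_pos (inv_pos.2 hs0)
  rw [Real.log_inv] at h
  have hsi : s * s⁻¹ = 1 := mul_inv_cancel₀ hs0.ne'
  have h1 : s * -Real.log s ≤ 1 - s := by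
    have := mul_le_mul_of_nonneg_left h hs0.le
    nlinarith
  have h2 := mul_le_mul_of_nonneg_left h1 (by positivity : (0:ℝ) ≤ 2 * s)
  have hx2 : x * Real.log x = 2 * (s ^ 2 * Real.log s) := by
    rw [hlog, ← hs2]; ring
  nlinarith [sq_nonneg s]

lemma nonneg_neg_mul_log {x : ℝ} (hx : 0 < x) (hx1 : x ≤ 1) : 0 ≤ -(x * Real.log x) := by
  have : Real.log x ≤ 0 := Real.log_nonpos hx.le hx1
  nlinarith

lemma lintegral_one_sub_inv_top :
    ∫⁻ t in Set.Ioo (0 : ℝ) 1, ENNReal.ofReal ((1 - t)⁻¹) = ⊤ := by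
  by_contra h
  have hm : AEStronglyMeasurable (fun t : ℝ => (1 - t)⁻¹)
      (volume.restrict (Set.Ioo (0:ℝ) 1)) :=
    ((measurable_const.sub measurable_id).inv).aestronglyMeasurable
  have hnn : 0 ≤ᵐ[volume.restrict (Set.Ioo (0:ℝ) 1)] fun t : ℝ => (1 - t)⁻¹ := by
    filter_upwards [ae_restrict_mem measurableSet_Ioo] with t ht
    exact inv_nonneg.2 (by linarith [ht.2])
  have hint : IntegrableOn (fun t : ℝ => (1 - t)⁻¹) (Set.Ioo 0 1) :=
    (lintegral_ofReal_ne_top_iff_integrable hm hnn).1 h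
  have hii : IntervalIntegrable (fun t : ℝ => (1 - t)⁻¹) volume 0 1 := by
    rwa [intervalIntegrable_iff_integrableOn_Ioo_of_le zero_le_one]
  have hc := hii.comp_sub_left 1
  simp only [sub_sub_cancel, sub_zero, sub_self] at hc
  have : IntervalIntegrable (fun x : ℝ => x⁻¹) volume 0 1 := hc.symm
  rw [intervalIntegrable_inv_iff] at this
  rcases this with h01 | h0
  · norm_num at h01
  · exact h0 (by simp [Set.uIcc_of_le (zero_le_one' ℝ)])

theorem stmt_15 (n : ℕ) (hn : 2 ≤ n)
    (Φ : (Fin n → ℝ) → ℝ)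
    (hΦ : ∀ p, Φ p = ∑ j, -(p j * Real.log (p j)))
    (γ : ℝ → (Fin n → ℝ))
    (hγ : ∀ t, γ t = fun (i : Fin n) =>
      t * (if (i : ℕ) = 0 then 1 else 0) + (1 - t) * ((n : ℝ)⁻¹)) :
    ∫⁻ t in Set.Ioo (0 : ℝ) 1, ENNReal.ofReal (1 / (Φ (γ t)) ^ 2) = ⊤ := by
  have hn0 : (0:ℝ) < n := by positivity
  have hn1 : (1:ℝ) ≤ n := by exact_mod_cast Nat.one_le_of_lt hn
  -- pointwise bound
  have key : ∀ t ∈ Set.Ioo (0:ℝ) 1,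
      ENNReal.ofReal ((4 * (n:ℝ)^2)⁻¹ * (1 - t)⁻¹) ≤ ENNReal.ofReal (1 / (Φ (γ t)) ^ 2) := by
    intro t ht
    obtain ⟨ht0, ht1⟩ := ht
    set u : ℝ := 1 - t with hu
    have hu0 : 0 < u := by simp only [hu]; linarith
    have hu1 : u < 1 := by simp only [hu]; linarith
    have hq0 : 0 < u * (n:ℝ)⁻¹ := by positivity
    have hni : (n:ℝ)⁻¹ ≤ 1 := by
      rw [inv_le_one_iff₀]; right; exact hn1
    have hqu : u * (n:ℝ)⁻¹ ≤ u := mul_le_of_le_one_right hu0.le hni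
    have hq1 : u * (n:ℝ)⁻¹ < 1 := lt_of_le_of_lt hqu hu1
    have hpj : ∀ j : Fin n, γ t j = if (j:ℕ) = 0 then t + u * (n:ℝ)⁻¹ else u * (n:ℝ)⁻¹ := by
      intro j
      rw [hγ]
      by_cases hj : (j:ℕ) = 0 <;> simp [hj, hu] <;> ring
    -- positivity of Φ
    have hΦpos : 0 < Φ (γ t) := by
      rw [hΦ]
      apply Finset.sum_pos'
      · intro j _
        rw [hpj j]
        by_cases hj : (j:ℕ) = 0
        · simp only [hj, if_true]
          refine nonneg_neg_mul_log (by linarith) ?_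
          have : u * (n:ℝ)⁻¹ ≤ u := hqu
          linarith
        · simp only [hj, if_false]
          exact nonneg_neg_mul_log hq0 hq1.le
      · refine ⟨⟨1, by omega⟩, Finset.mem_univ _, ?_⟩
        rw [hpj]
        simp only [Fin.val_mk, Nat.one_ne_zero, if_false]
        have hlog : Real.log (u * (n:ℝ)⁻¹) < 0 := Real.log_neg hq0 hq1
        nlinarith
    -- upper bound on Φ
    have hΦle : Φ (γ t) ≤ (n:ℝ) * (2 * Real.sqrt u) := by
      rw [hΦ]
      calc ∑ j : Fin n, -(γ t j * Real.log (γ t j))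
          ≤ ∑ _j : Fin n, 2 * Real.sqrt u := by
            apply Finset.sum_le_sum
            intro j _
            rw [hpj j]
            by_cases hj : (j:ℕ) = 0
            · simp only [hj, if_true]
              have h1 : -((t + u * (n:ℝ)⁻¹) * Real.log (t + u * (n:ℝ)⁻¹)) ≤
                  1 - (t + u * (n:ℝ)⁻¹) := neg_mul_log_le_one_sub (by linarith)
              have h2 : 1 - (t + u * (n:ℝ)⁻¹) ≤ u := by
                have : 0 ≤ u * (n:ℝ)⁻¹ := hq0.le
                simp only [hu]; linarith
              have h3 : u ≤ Real.sqrt u := by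
                nlinarith [Real.sq_sqrt hu0.le, Real.sqrt_nonneg u,
                  Real.sqrt_le_sqrt hu1.le, Real.sqrt_one]
              have h4 : 0 ≤ Real.sqrt u := Real.sqrt_nonneg u
              linarith
            · simp only [hj, if_false]
              have h1 := neg_mul_log_le_two_sqrt hq0
              have h2 : Real.sqrt (u * (n:ℝ)⁻¹) ≤ Real.sqrt u := Real.sqrt_le_sqrt hqu
              linarith
        _ = (n:ℝ) * (2 * Real.sqrt u) := by
            rw [Finset.sum_const, Finset.card_univ, Fintype.card_fin, nsmul_eq_mul]
    -- conclude pointwise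
    apply ENNReal.ofReal_le_ofReal
    have hsq : (Φ (γ t))^2 ≤ 4 * (n:ℝ)^2 * u := by
      have h2 : (Φ (γ t))^2 ≤ ((n:ℝ) * (2 * Real.sqrt u))^2 :=
        pow_le_pow_left₀ hΦpos.le hΦle 2
      have h3 : ((n:ℝ) * (2 * Real.sqrt u))^2 = 4 * (n:ℝ)^2 * u := by
        rw [mul_pow, mul_pow, Real.sq_sqrt hu0.le]; ring
      linarith
    have h4 : (4 * (n:ℝ)^2 * u)⁻¹ ≤ ((Φ (γ t))^2)⁻¹ :=
      inv_anti₀ (by positivity) hsq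
    calc (4*(n:ℝ)^2)⁻¹ * (1-t)⁻¹ = (4*(n:ℝ)^2)⁻¹ * u⁻¹ := by rw [hu]
      _ = (4*(n:ℝ)^2 * u)⁻¹ := (mul_inv _ _).symm
      _ ≤ ((Φ (γ t))^2)⁻¹ := h4
      _ = 1 / (Φ (γ t))^2 := (one_div _).symm
  -- conclude
  rw [eq_top_iff]
  calc (⊤ : ENNReal) = ∫⁻ t in Set.Ioo (0:ℝ) 1,
        ENNReal.ofReal ((4 * (n:ℝ)^2)⁻¹ * (1 - t)⁻¹) := by
        have hc : (0:ℝ) ≤ (4 * (n:ℝ)^2)⁻¹ := by positivity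
        have : ∀ t : ℝ, ENNReal.ofReal ((4 * (n:ℝ)^2)⁻¹ * (1 - t)⁻¹) =
            ENNReal.ofReal ((4 * (n:ℝ)^2)⁻¹) * ENNReal.ofReal ((1 - t)⁻¹) := fun t =>
          ENNReal.ofReal_mul hc
        simp_rw [this]
        rw [lintegral_const_mul' _ _ ENNReal.ofReal_ne_top, lintegral_one_sub_inv_top,
          ENNReal.mul_top (ENNReal.ofReal_pos.2 (by positivity)).ne']
    _ ≤ _ := by
        apply setLIntegral_mono' measurableSet_Ioo
        intro t ht
        exact key t ht
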